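/- Let d ≥ 1 and let F : ℝ^d → ℝ^d be a locally Lipschitz single-valued cyclically quasi-monotone map with F(x) ≠ 0 for every x ∈ ℝ^d. Let p ∈ ℝ^d, let K be a compact subset of the topological boundary of C^F(p), and let T > 0. Then for every ε > 0 there exists δ₀ > 0 such that: for every 0 < δ ≤ δ₀ and every finite tuple of points x_0, …, x_n ∈ K with n·δ ≤ 2T and |x_{i+1} − x_i| = δ for every 0 ≤ i ≤ n−1, there exist points x̃_0, …, x̃_n ∈ ℝ^d with x̃_0 = x_0, |x̃_i − x_i| ≤ ε for every 0 ≤ i ≤ n, and (x̃_{i+1} − x̃_i)·F(x̃_i) > 0 for every 0 ≤ i ≤ n−1. -/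
import Mathlib


open scoped RealInnerProductSpace

/-- Cyclic quasi-monotonicity of a single-valued map `F : ℝ^d → ℝ^d`. -/
def CyclicallyQuasiMonotoneS {d : ℕ}
    (F : EuclideanSpace ℝ (Fin d) → EuclideanSpace ℝ (Fin d)) : Prop :=
  ∀ (N : ℕ) (x : ℕ → EuclideanSpace ℝ (Fin d)),
    0 < N → x N = x 0 →
    ∃ i < N, ⟪F (x i), x (i + 1) - x i⟫ ≤ 0

/-- `a ≺_F b`: there is an `F`-ascending path from `a` to `b`. -/
def PrecS {d : ℕ} (F : EuclideanSpace ℝ (Fin d) → EuclideanSpace ℝ (Fin d))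
    (a b : EuclideanSpace ℝ (Fin d)) : Prop :=
  ∃ (N : ℕ) (x : ℕ → EuclideanSpace ℝ (Fin d)),
    0 < N ∧ x 0 = a ∧ x N = b ∧ ∀ i < N, 0 < ⟪F (x i), x (i + 1) - x i⟫

/-- `a ⪯_F b`: `{w : w ≺_F a} ⊆ {w : w ≺_F b}`. -/
def PreceqS {d : ℕ} (F : EuclideanSpace ℝ (Fin d) → EuclideanSpace ℝ (Fin d))
    (a b : EuclideanSpace ℝ (Fin d)) : Prop :=
  ∀ w, PrecS F w a → PrecS F w b

/-- The convex set `C^F(x) = {w : w ⪯_F x}`. -/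
def CS {d : ℕ} (F : EuclideanSpace ℝ (Fin d) → EuclideanSpace ℝ (Fin d))
    (x : EuclideanSpace ℝ (Fin d)) : Set (EuclideanSpace ℝ (Fin d)) :=
  {w | PreceqS F w x}

lemma precS_trans {d : ℕ} {F : EuclideanSpace ℝ (Fin d) → EuclideanSpace ℝ (Fin d)}
    {a b c : EuclideanSpace ℝ (Fin d)} (h1 : PrecS F a b) (h2 : PrecS F b c) :
    PrecS F a c := by
  obtain ⟨N, x, hN, hx0, hxN, hx⟩ := h1
  obtain ⟨M, z, hM, hz0, hzM, hz⟩ := h2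
  refine ⟨N + M, fun i => if i < N then x i else z (i - N), by omega, by simp [hN, hx0], ?_, ?_⟩
  · simp only [show ¬ (N + M < N) by omega, if_neg]
    simpa using hzM
  · intro i hi
    by_cases h : i < N
    · have e1 : (if i < N then x i else z (i - N)) = x i := if_pos h
      have e2 : (if i + 1 < N then x (i+1) else z (i + 1 - N)) = x (i + 1) := by
        by_cases h' : i + 1 < N
        · exact if_pos h'
        · have : i + 1 = N := by omega
          simp [this, if_neg, hxN, hz0]
      simpa [e1, e2] using hx i h
    · have e1 : (if i < N then x i else z (i - N)) = z (i - N) := if_neg h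
      have e2 : (if i + 1 < N then x (i+1) else z (i + 1 - N)) = z (i - N + 1) := by
        rw [if_neg (by omega)]
        have h3 : i + 1 - N = i - N + 1 := by omega
        rw [h3]
      have := hz (i - N) (by omega)
      simpa [e1, e2] using this

lemma CS_isClosed {d : ℕ} (F : EuclideanSpace ℝ (Fin d) → EuclideanSpace ℝ (Fin d))
    (p : EuclideanSpace ℝ (Fin d)) : IsClosed (CS F p) := by
  rw [← closure_subset_iff_isClosed]
  intro q hq w hw
  obtain ⟨N, z, hN, hz0, hzN, hz⟩ := hw
  set O : Set (EuclideanSpace ℝ (Fin d)) := {c | 0 < ⟪F (z (N-1)), c - z (N-1)⟫} with hO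
  have hOopen : IsOpen O := by
    apply isOpen_lt continuous_const
    exact Continuous.inner continuous_const (continuous_id.sub continuous_const)
  have hqO : q ∈ O := by
    have := hz (N-1) (by omega)
    rw [show N - 1 + 1 = N by omega, hzN] at this
    exact this
  obtain ⟨c, hcO, hcC⟩ := _root_.mem_closure_iff.mp hq O hOopen hqO
  have hcO' : 0 < ⟪F (z (N-1)), c - z (N-1)⟫ := hcO
  have hwc : PrecS F w c := by
    refine ⟨N, fun i => if i = N then c else z i, hN, by simp [Nat.ne_of_lt hN, hz0], by simp, ?_⟩
    intro i hi
    show 0 < ⟪F (if i = N then c else z i),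
        (if i + 1 = N then c else z (i+1)) - (if i = N then c else z i)⟫
    rw [if_neg (by omega : ¬ i = N)]
    by_cases h : i + 1 = N
    · rw [if_pos h]
      have hi' : i = N - 1 := by omega
      subst hi'
      exact hcO'
    · rw [if_neg h]
      exact hz i hi
  exact hcC w hwc

lemma sep_out {d : ℕ} {F : EuclideanSpace ℝ (Fin d) → EuclideanSpace ℝ (Fin d)}
    {p a b : EuclideanSpace ℝ (Fin d)} (ha : a ∈ CS F p) (hb : b ∉ CS F p) :
    ⟪F b, a - b⟫ ≤ 0 := by
  by_contra h
  push_neg at h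
  have hba : PrecS F b a := ⟨1, fun i => if i = 0 then b else a, one_pos, by simp, by simp, ?_⟩
  · simp only [CS, PreceqS, Set.mem_setOf_eq, not_forall] at hb
    obtain ⟨w, hwb, hwp⟩ := hb
    exact hwp (ha w (precS_trans hwb hba))
  · intro i hi
    have : i = 0 := by omega
    simpa [this] using h

lemma frontier_inner_le {d : ℕ} {F : EuclideanSpace ℝ (Fin d) → EuclideanSpace ℝ (Fin d)}
    (hcont : Continuous F) {p x w : EuclideanSpace ℝ (Fin d)}
    (hx : x ∈ frontier (CS F p)) (hw : w ∈ CS F p) : ⟪F x, w - x⟫ ≤ 0 := by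
  have hclosed : IsClosed (CS F p) := CS_isClosed F p
  have hsub : (CS F p)ᶜ ⊆ {b | ⟪F b, w - b⟫ ≤ 0} := fun b hb => sep_out hw hb
  have hclosed2 : IsClosed {b | ⟪F b, w - b⟫ ≤ 0} := by
    apply isClosed_le
    · exact Continuous.inner hcont (continuous_const.sub continuous_id)
    · exact continuous_const
  have hxc : x ∈ closure ((CS F p)ᶜ) := by
    rw [closure_compl]
    exact hx.2
  exact closure_minimal hsub hclosed2 hxc

lemma exists_unif_lip {X Y : Type*} [PseudoMetricSpace X] [PseudoMetricSpace Y]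
    {f : X → Y} (hf : LocallyLipschitz f) {s : Set X} (hs : IsCompact s) :
    ∃ L : ℝ, 0 ≤ L ∧ ∃ r : ℝ, 0 < r ∧
      ∀ x ∈ s, ∀ y, dist y x ≤ r → dist (f y) (f x) ≤ L * dist y x := by
  choose Kf t ht hlt using hf
  have hball : ∀ z : X, ∃ ρ : ℝ, 0 < ρ ∧ Metric.ball z ρ ⊆ t z := by
    intro z
    obtain ⟨ρ, hρ, hsub⟩ := Metric.mem_nhds_iff.mp (ht z)
    exact ⟨ρ, hρ, hsub⟩
  choose ρ hρpos hρsub using hball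
  obtain ⟨I, hIs, hIcov⟩ := hs.elim_nhds_subcover (fun z => Metric.ball z (ρ z / 3))
    (fun z _ => Metric.ball_mem_nhds z (by have := hρpos z; linarith))
  rcases I.eq_empty_or_nonempty with hI | hI
  · refine ⟨0, le_rfl, 1, one_pos, fun x hx y _ => ?_⟩
    exact absurd (hIcov hx) (by simp [hI])
  · refine ⟨(I.sup Kf : NNReal), (I.sup Kf).coe_nonneg,
      I.inf' hI (fun z => ρ z / 3), ?_, ?_⟩
    · apply Finset.lt_inf'_iff hI (f := fun z => ρ z / 3) (a := 0) |>.mpr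
      intro z _
      have := hρpos z
      linarith
    · intro x hx y hy
      obtain ⟨z, hzI, hxz⟩ := Set.mem_iUnion₂.mp (hIcov hx)
      have hxz' : dist x z < ρ z / 3 := Metric.mem_ball.mp hxz
      have hrle : I.inf' hI (fun z => ρ z / 3) ≤ ρ z / 3 := Finset.inf'_le _ hzI
      have hyz : dist y z < ρ z := by
        have := dist_triangle y x z
        have hρz := hρpos z
        linarith [hy.trans hrle]
      have hxt : x ∈ t z := hρsub z (Metric.mem_ball.mpr (by linarith [hρpos z]))
      have hyt : y ∈ t z := hρsub z (Metric.mem_ball.mpr hyz)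
      have hKle : (Kf z : ℝ) ≤ (I.sup Kf : NNReal) := by
        exact_mod_cast NNReal.coe_le_coe.mpr (Finset.le_sup hzI)
      calc dist (f y) (f x) ≤ (Kf z : ℝ) * dist y x := (hlt z).dist_le_mul y hyt x hxt
        _ ≤ ((I.sup Kf : NNReal) : ℝ) * dist y x :=
            mul_le_mul_of_nonneg_right hKle dist_nonneg

section StepAux
variable {E : Type*} [NormedAddCommGroup E] [InnerProductSpace ℝ E]

lemma unit_sub (Fa Fb : E) {m : ℝ} (hm : 0 < m) (hFa : Fa ≠ 0) (hFb : Fb ≠ 0)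
    (hma : m ≤ ‖Fa‖) (hmb : m ≤ ‖Fb‖) :
    ‖‖Fb‖⁻¹ • Fb - ‖Fa‖⁻¹ • Fa‖ ≤ 2 / m * ‖Fb - Fa‖ := by
  have hna : ‖Fa‖ ≠ 0 := norm_ne_zero_iff.mpr hFa
  have hnb : ‖Fb‖ ≠ 0 := norm_ne_zero_iff.mpr hFb
  have key : ‖Fb‖⁻¹ • Fb - ‖Fa‖⁻¹ • Fa
      = ‖Fb‖⁻¹ • (Fb - Fa) + ((‖Fa‖ - ‖Fb‖) * ‖Fb‖⁻¹ * ‖Fa‖⁻¹) • Fa := by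
    match_scalars
    · field_simp
    · field_simp
      ring
  rw [key]
  have h1 : ‖‖Fb‖⁻¹ • (Fb - Fa)‖ ≤ 1 / m * ‖Fb - Fa‖ := by
    rw [norm_smul, Real.norm_eq_abs, abs_of_nonneg (by positivity)]
    apply mul_le_mul_of_nonneg_right _ (norm_nonneg _)
    rw [one_div]
    exact inv_anti₀ hm hmb
  have h2 : ‖((‖Fa‖ - ‖Fb‖) * ‖Fb‖⁻¹ * ‖Fa‖⁻¹) • Fa‖ ≤ 1 / m * ‖Fb - Fa‖ := by
    rw [norm_smul, Real.norm_eq_abs, abs_mul, abs_mul, abs_inv, abs_inv,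
      abs_norm, abs_norm, mul_assoc, mul_assoc, inv_mul_cancel₀ hna, mul_one]
    have habs : |‖Fa‖ - ‖Fb‖| ≤ ‖Fb - Fa‖ := by
      rw [norm_sub_rev]
      exact abs_norm_sub_norm_le Fa Fb
    calc |‖Fa‖ - ‖Fb‖| * ‖Fb‖⁻¹ ≤ ‖Fb - Fa‖ * m⁻¹ := by
          apply mul_le_mul habs (inv_anti₀ hm hmb) (by positivity) (norm_nonneg _)
      _ = 1 / m * ‖Fb - Fa‖ := by ring
  calc ‖‖Fb‖⁻¹ • (Fb - Fa) + ((‖Fa‖ - ‖Fb‖) * ‖Fb‖⁻¹ * ‖Fa‖⁻¹) • Fa‖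
      ≤ ‖‖Fb‖⁻¹ • (Fb - Fa)‖ + ‖((‖Fa‖ - ‖Fb‖) * ‖Fb‖⁻¹ * ‖Fa‖⁻¹) • Fa‖ := norm_add_le _ _
    _ ≤ 1 / m * ‖Fb - Fa‖ + 1 / m * ‖Fb - Fa‖ := add_le_add h1 h2
    _ = 2 / m * ‖Fb - Fa‖ := by ring

lemma numeric_ineq (L M L' δ s A m : ℝ) (hL : 0 ≤ L) (hM : 0 ≤ M) (hL' : 0 ≤ L')
    (hδ : 0 < δ) (hδ1 : δ ≤ 1) (hs : 0 ≤ s) (hs1 : s ≤ 1)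
    (hAm : A * m = 4*L + 2*M*L'^2 + 4*L*L' + 1) :
    L*δ^2 + L*s*δ + s*(M*(L'*δ)^2/2 + (L*s)*(L'*δ)) < (A*δ*(s+δ)) * (m/2) := by
  have hrw : (A*δ*(s+δ)) * (m/2) = (4*L + 2*M*L'^2 + 4*L*L' + 1) * (δ*(s+δ)) / 2 := by
    rw [← hAm]; ring
  rw [hrw]
  have e1 : 0 ≤ M*L'^2*δ*s*(2-δ) := by
    apply mul_nonneg (by positivity) (by linarith)
  have e2 : 0 ≤ L*L'*δ*s*(2-s) := by
    apply mul_nonneg (by positivity) (by linarith)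
  have e3 : 0 ≤ L*δ*s := by positivity
  have e4 : 0 < δ*δ := by positivity
  have e5 : 0 ≤ L*δ*δ := by positivity
  have e6 : 0 ≤ M*L'^2*δ*δ := by positivity
  have e7 : 0 ≤ L*L'*δ*δ := by positivity
  have e8 : 0 ≤ δ*s := by positivity
  nlinarith [e1, e2, e3, e4, e5, e6, e7, e8]

set_option maxHeartbeats 1000000 in
lemma step_aux (a b Fa Fb c : E) (δ s t L m M A L' : ℝ)
    (hδ : 0 < δ) (hm : 0 < m) (hL : 0 ≤ L) (hL' : L' = 2*L/m)
    (hFa : Fa ≠ 0) (hFb : Fb ≠ 0)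
    (hma : m ≤ ‖Fa‖) (hMa : ‖Fa‖ ≤ M) (hmb : m ≤ ‖Fb‖)
    (hab : ‖b - a‖ ≤ δ)
    (hlipab : ‖Fb - Fa‖ ≤ L * δ)
    (hlipc : ‖c - Fa‖ ≤ L * s)
    (hbase : -(L * δ^2) ≤ ⟪Fa, b - a⟫)
    (hs : 0 ≤ s) (hs1 : s ≤ 1) (hδ1 : δ ≤ 1)
    (ht : t - s = A*δ*(s+δ))
    (hC1 : L*s + M*L'*δ ≤ m/2)
    (hAm : A * m = 4*L + 2*M*L'^2 + 4*L*L' + 1) :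
    0 < ⟪c, (b + t • (‖Fb‖⁻¹ • Fb)) - (a + s • (‖Fa‖⁻¹ • Fa))⟫ := by
  have hM : 0 ≤ M := (norm_nonneg Fa).trans hMa
  have hL'0 : 0 ≤ L' := by rw [hL']; positivity
  set ua : E := ‖Fa‖⁻¹ • Fa with hua
  set ub : E := ‖Fb‖⁻¹ • Fb with hub
  have hnua : ‖ua‖ = 1 := by
    rw [hua, norm_smul, Real.norm_eq_abs, abs_of_nonneg (by positivity),
      inv_mul_cancel₀ (norm_ne_zero_iff.mpr hFa)]
  have hnub : ‖ub‖ = 1 := by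
    rw [hub, norm_smul, Real.norm_eq_abs, abs_of_nonneg (by positivity),
      inv_mul_cancel₀ (norm_ne_zero_iff.mpr hFb)]
  have hU : ‖ub - ua‖ ≤ L' * δ := by
    calc ‖ub - ua‖ ≤ 2 / m * ‖Fb - Fa‖ := unit_sub Fa Fb hm hFa hFb hma hmb
      _ ≤ 2 / m * (L * δ) := by
          apply mul_le_mul_of_nonneg_left hlipab (by positivity)
      _ = L' * δ := by rw [hL']; ring
  have hdecomp : (b + t • ub) - (a + s • ua) = (b - a) + s • (ub - ua) + (t - s) • ub := by
    module
  rw [hdecomp, inner_add_right, inner_add_right, real_inner_smul_right, real_inner_smul_right]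
  -- bound T1
  have hcFa : ∀ v : E, |⟪c - Fa, v⟫| ≤ L * s * ‖v‖ := by
    intro v
    calc |⟪c - Fa, v⟫| ≤ ‖c - Fa‖ * ‖v‖ := abs_real_inner_le_norm _ _
      _ ≤ L * s * ‖v‖ := mul_le_mul_of_nonneg_right hlipc (norm_nonneg _)
  have hT1 : ⟪c, b - a⟫ ≥ -(L * δ^2) - (L * s) * δ := by
    have h1 : ⟪c, b - a⟫ = ⟪Fa, b - a⟫ + ⟪c - Fa, b - a⟫ := by
      rw [← inner_add_left]; congr 1; abel
    have h2 := hcFa (b - a)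
    have h3 : L * s * ‖b - a‖ ≤ L * s * δ := by
      apply mul_le_mul_of_nonneg_left hab (by positivity)
    rw [h1]
    have := abs_le.mp h2
    linarith [this.1]
  -- inner Fa (ub - ua) = -‖Fa‖ * ‖ub - ua‖^2 / 2
  have hFaU : ⟪Fa, ub - ua⟫ = -(‖Fa‖ * ‖ub - ua‖^2 / 2) := by
    have hFaua : Fa = ‖Fa‖ • ua := by
      rw [hua, smul_smul, mul_inv_cancel₀ (norm_ne_zero_iff.mpr hFa), one_smul]
    have hsq : ‖ub - ua‖^2 = 2 - 2 * ⟪ua, ub⟫ := by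
      have := norm_sub_sq_real ub ua
      rw [hnua, hnub, real_inner_comm] at this
      linarith [this]
    have hstep1 : ⟪Fa, ub - ua⟫ = ‖Fa‖ * ⟪ua, ub - ua⟫ := by
      have h := real_inner_smul_left ua (ub - ua) ‖Fa‖
      rw [← hFaua] at h
      exact h
    calc ⟪Fa, ub - ua⟫ = ‖Fa‖ * ⟪ua, ub - ua⟫ := hstep1
      _ = ‖Fa‖ * (⟪ua, ub⟫ - ⟪ua, ua⟫) := by rw [inner_sub_right]
      _ = ‖Fa‖ * (⟪ua, ub⟫ - 1) := by
          rw [real_inner_self_eq_norm_sq, hnua]; norm_num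
      _ = -(‖Fa‖ * ‖ub - ua‖^2 / 2) := by rw [hsq]; ring
  have hT2 : ⟪c, ub - ua⟫ ≥ -(M * (L'*δ)^2/2) - (L*s) * (L'*δ) := by
    have h1 : ⟪c, ub - ua⟫ = ⟪Fa, ub - ua⟫ + ⟪c - Fa, ub - ua⟫ := by
      rw [← inner_add_left]; congr 1; abel
    have h2 := abs_le.mp (hcFa (ub - ua))
    have h3 : L * s * ‖ub - ua‖ ≤ L * s * (L' * δ) := by
      apply mul_le_mul_of_nonneg_left hU (by positivity)
    have h4 : ‖Fa‖ * ‖ub - ua‖^2 / 2 ≤ M * (L'*δ)^2 / 2 := by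
      have hx : ‖ub - ua‖^2 ≤ (L'*δ)^2 := by
        nlinarith [norm_nonneg (ub - ua), hU]
      nlinarith [norm_nonneg Fa, hMa, hx, sq_nonneg (L'*δ)]
    rw [h1, hFaU]
    linarith [h2.1]
  have hT3 : ⟪c, ub⟫ ≥ m / 2 := by
    have h1 : ⟪Fa, ua⟫ + ⟪Fa, ub - ua⟫ + ⟪c - Fa, ub⟫ = ⟪c, ub⟫ := by
      rw [inner_sub_left, inner_sub_right]
      ring
    have h2 : ⟪Fa, ua⟫ = ‖Fa‖ := by
      rw [hua, real_inner_smul_right, real_inner_self_eq_norm_sq, sq,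
        inv_mul_cancel_left₀ (norm_ne_zero_iff.mpr hFa)]
    have h3 : |⟪Fa, ub - ua⟫| ≤ M * (L' * δ) := by
      calc |⟪Fa, ub - ua⟫| ≤ ‖Fa‖ * ‖ub - ua‖ := abs_real_inner_le_norm _ _
        _ ≤ M * (L' * δ) := mul_le_mul hMa hU (norm_nonneg _) hM
    have h4 := abs_le.mp h3
    have h5 := abs_le.mp (hcFa ub)
    rw [hnub, mul_one] at h5
    have := h4.1
    have := h5.1
    rw [← h1, h2]
    linarith [hma]
  have hA : 0 < A := by nlinarith [mul_nonneg hM (sq_nonneg L'), mul_nonneg hL hL'0]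
  have hnum := numeric_ineq L M L' δ s A m hL hM hL'0 hδ hδ1 hs hs1 hAm
  have h5 : (A*δ*(s+δ)) * (m/2) ≤ (t - s) * ⟪c, ub⟫ := by
    rw [ht]
    exact mul_le_mul_of_nonneg_left hT3 (by positivity)
  have h6 : s * (-(M*(L'*δ)^2/2) - (L*s)*(L'*δ)) ≤ s * ⟪c, ub - ua⟫ :=
    mul_le_mul_of_nonneg_left hT2 hs
  have h6' : -(s*(M*(L'*δ)^2/2 + (L*s)*(L'*δ))) ≤ s * ⟪c, ub - ua⟫ := by
    calc -(s*(M*(L'*δ)^2/2 + (L*s)*(L'*δ)))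
        = s * (-(M*(L'*δ)^2/2) - (L*s)*(L'*δ)) := by ring
      _ ≤ s * ⟪c, ub - ua⟫ := h6
  linarith [hT1, h5, h6', hnum]

end StepAux


set_option maxHeartbeats 1000000 in
theorem stmt17 (d : ℕ) (hd : 1 ≤ d)
    (F : EuclideanSpace ℝ (Fin d) → EuclideanSpace ℝ (Fin d))
    (hlip : LocallyLipschitz F) (hF : CyclicallyQuasiMonotoneS F)
    (hnv : ∀ x, F x ≠ 0) (p : EuclideanSpace ℝ (Fin d))
    (K : Set (EuclideanSpace ℝ (Fin d))) (hK : IsCompact K)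
    (hKsub : K ⊆ frontier (CS F p)) (T : ℝ) (hT : 0 < T) :
    ∀ ε > 0, ∃ δ₀ > 0, ∀ δ : ℝ, 0 < δ → δ ≤ δ₀ →
      ∀ (n : ℕ) (x : ℕ → EuclideanSpace ℝ (Fin d)),
        (∀ i ≤ n, x i ∈ K) → (n : ℝ) * δ ≤ 2 * T →
        (∀ i < n, ‖x (i + 1) - x i‖ = δ) →
        ∃ y : ℕ → EuclideanSpace ℝ (Fin d),
          y 0 = x 0 ∧ (∀ i ≤ n, ‖y i - x i‖ ≤ ε) ∧
          ∀ i < n, 0 < ⟪F (y i), y (i + 1) - y i⟫ := by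
  intro ε hε
  rcases K.eq_empty_or_nonempty with hKe | hKne
  · refine ⟨1, one_pos, fun δ _ _ n x hxK _ _ => ?_⟩
    exact absurd (hxK 0 (Nat.zero_le n)) (by simp [hKe])
  have hCclosed : IsClosed (CS F p) := CS_isClosed F p
  have hKC : K ⊆ CS F p := fun z hz => hCclosed.frontier_subset (hKsub hz)
  have Fcont : Continuous F := hlip.continuous
  set K1 := Metric.cthickening 1 K with hK1
  have hK1c : IsCompact K1 := hK.cthickening
  have hKK1 : K ⊆ K1 := Metric.self_subset_cthickening K
  have hK1ne : K1.Nonempty := hKne.mono hKK1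
  obtain ⟨zm, hzm1, hzmmin⟩ := hK1c.exists_isMinOn hK1ne (Fcont.norm.continuousOn)
  obtain ⟨zM, hzM1, hzMmax⟩ := hK1c.exists_isMaxOn hK1ne (Fcont.norm.continuousOn)
  set m := ‖F zm‖ with hmdef
  set M := ‖F zM‖ with hMdef
  have hm : 0 < m := norm_pos_iff.mpr (hnv zm)
  have hM0 : 0 ≤ M := norm_nonneg _
  have hmle : ∀ y ∈ K1, m ≤ ‖F y‖ := fun y hy => isMinOn_iff.mp hzmmin y hy
  have hMge : ∀ y ∈ K1, ‖F y‖ ≤ M := fun y hy => isMaxOn_iff.mp hzMmax y hy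
  obtain ⟨L, hL0, r, hr0, hLip⟩ := exists_unif_lip hlip hK1c
  set L' := 2*L/m with hL'def
  have hL'0 : 0 ≤ L' := by positivity
  set A := (4*L + 2*M*L'^2 + 4*L*L' + 1)/m with hAdef
  have hA : 0 < A := by positivity
  have hAm : A * m = 4*L + 2*M*L'^2 + 4*L*L' + 1 := div_mul_cancel₀ _ hm.ne'
  set Ee := Real.exp (2*A*T) with hEdef
  have hE1 : 1 ≤ Ee := Real.one_le_exp (by positivity)
  have hE0 : 0 < Ee := lt_of_lt_of_le one_pos hE1
  set c0 := min (min ε 1) r with hc0def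
  have hc0 : 0 < c0 := lt_min (lt_min hε one_pos) hr0
  refine ⟨min (min 1 r) (min (c0/Ee) (m/(4*(L*Ee + M*L' + 1)))), by positivity, ?_⟩
  intro δ hδ hδle n x hxK hnT hstep
  have hδ1 : δ ≤ 1 := hδle.trans ((min_le_left _ _).trans (min_le_left _ _))
  have hδr : δ ≤ r := hδle.trans ((min_le_left _ _).trans (min_le_right _ _))
  have hδE : δ * Ee ≤ c0 := by
    have h := hδle.trans ((min_le_right _ _).trans (min_le_left _ _))
    calc δ * Ee ≤ (c0/Ee)*Ee := mul_le_mul_of_nonneg_right h hE0.le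
      _ = c0 := div_mul_cancel₀ _ hE0.ne'
  have hδm : 4*(L*Ee + M*L' + 1)*δ ≤ m := by
    have h := hδle.trans ((min_le_right _ _).trans (min_le_right _ _))
    have hD : (0:ℝ) < 4*(L*Ee + M*L' + 1) := by positivity
    calc 4*(L*Ee+M*L'+1)*δ ≤ 4*(L*Ee+M*L'+1)*(m/(4*(L*Ee+M*L'+1))) :=
          mul_le_mul_of_nonneg_left h hD.le
      _ = m := by field_simp
  set η : ℕ → ℝ := fun i => δ*((1+A*δ)^i - 1) with hηdef
  have hbase1 : (1:ℝ) ≤ 1 + A*δ := by nlinarith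
  have hη0 : ∀ i, 0 ≤ η i := by
    intro i
    have h := one_le_pow₀ hbase1 (n := i)
    simp only [hηdef]
    nlinarith
  have hpow : ∀ i ≤ n, (1+A*δ)^i ≤ Ee := by
    intro i hi
    have h1 : (1+A*δ) ≤ Real.exp (A*δ) := by
      have := Real.add_one_le_exp (A*δ); linarith
    have h2 : (1+A*δ)^i ≤ Real.exp (A*δ)^i := pow_le_pow_left₀ (by positivity) h1 i
    have h3 : Real.exp (A*δ)^i = Real.exp ((i:ℝ)*(A*δ)) := (Real.exp_nat_mul _ i).symm
    have h4 : (i:ℝ)*(A*δ) ≤ 2*A*T := by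
      have hin : (i:ℝ) ≤ (n:ℝ) := Nat.cast_le.mpr hi
      have h5 : (i:ℝ)*δ ≤ (n:ℝ)*δ := mul_le_mul_of_nonneg_right hin hδ.le
      nlinarith
    calc (1+A*δ)^i ≤ Real.exp ((i:ℝ)*(A*δ)) := by rw [← h3]; exact h2
      _ ≤ Real.exp (2*A*T) := Real.exp_le_exp.mpr h4
  have hηb : ∀ i ≤ n, η i ≤ δ*Ee := by
    intro i hi
    have h := hpow i hi
    simp only [hηdef]
    nlinarith
  have hηrec : ∀ i : ℕ, η (i+1) - η i = A*δ*(η i + δ) := by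
    intro i
    simp only [hηdef]
    rw [pow_succ]
    ring
  have hη1 : ∀ i ≤ n, η i ≤ 1 := fun i hi =>
    (hηb i hi).trans (hδE.trans ((min_le_left _ _).trans (min_le_right _ _)))
  have hηr : ∀ i ≤ n, η i ≤ r := fun i hi => (hηb i hi).trans (hδE.trans (min_le_right _ _))
  have hηε : ∀ i ≤ n, η i ≤ ε := fun i hi =>
    (hηb i hi).trans (hδE.trans ((min_le_left _ _).trans (min_le_left _ _)))
  have hun : ∀ i : ℕ, ‖(‖F (x i)‖⁻¹ • F (x i) : EuclideanSpace ℝ (Fin d))‖ = 1 := by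
    intro i
    rw [norm_smul, Real.norm_eq_abs, abs_of_nonneg (by positivity),
      inv_mul_cancel₀ (norm_ne_zero_iff.mpr (hnv _))]
  have hyx : ∀ i : ℕ, ‖(x i + η i • (‖F (x i)‖⁻¹ • F (x i))) - x i‖ = η i := by
    intro i
    rw [add_sub_cancel_left, norm_smul, hun i, mul_one, Real.norm_eq_abs,
      abs_of_nonneg (hη0 i)]
  refine ⟨fun i => x i + η i • (‖F (x i)‖⁻¹ • F (x i)), ?_, ?_, ?_⟩
  · show x 0 + η 0 • (‖F (x 0)‖⁻¹ • F (x 0)) = x 0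
    simp [hηdef]
  · intro i hi
    show ‖(x i + η i • (‖F (x i)‖⁻¹ • F (x i))) - x i‖ ≤ ε
    rw [hyx i]
    exact hηε i hi
  · intro i hi
    have hx_i : x i ∈ K := hxK i hi.le
    have hx_i1 : x (i+1) ∈ K := hxK (i+1) hi
    have hFa := hnv (x i)
    have hFb := hnv (x (i+1))
    have hma := hmle (x i) (hKK1 hx_i)
    have hMa := hMge (x i) (hKK1 hx_i)
    have hmb := hmle (x (i+1)) (hKK1 hx_i1)
    have hab : ‖x (i+1) - x i‖ ≤ δ := le_of_eq (hstep i hi)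
    have hdxx : dist (x (i+1)) (x i) = δ := by rw [dist_eq_norm]; exact hstep i hi
    have hlipab : ‖F (x (i+1)) - F (x i)‖ ≤ L * δ := by
      have h := hLip (x i) (hKK1 hx_i) (x (i+1)) (by rw [hdxx]; exact hδr)
      rw [dist_eq_norm, hdxx] at h
      exact h
    have hdyx : dist (x i + η i • (‖F (x i)‖⁻¹ • F (x i))) (x i) = η i := by
      rw [dist_eq_norm]; exact hyx i
    have hlipc : ‖F (x i + η i • (‖F (x i)‖⁻¹ • F (x i))) - F (x i)‖ ≤ L * η i := by
      have h := hLip (x i) (hKK1 hx_i) _ (by rw [hdyx]; exact hηr i hi.le)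
      rw [dist_eq_norm, hdyx] at h
      exact h
    have hfr : ⟪F (x (i+1)), x i - x (i+1)⟫ ≤ 0 :=
      frontier_inner_le Fcont (hKsub hx_i1) (hKC hx_i)
    have hbase : -(L * δ^2) ≤ ⟪F (x i), x (i+1) - x i⟫ := by
      have h1 : 0 ≤ ⟪F (x (i+1)), x (i+1) - x i⟫ := by
        have : x (i+1) - x i = -(x i - x (i+1)) := by abel
        rw [this, inner_neg_right]
        linarith
      have h2 : |⟪F (x i) - F (x (i+1)), x (i+1) - x i⟫| ≤ (L*δ)*δ := by
        calc |⟪F (x i) - F (x (i+1)), x (i+1) - x i⟫|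
            ≤ ‖F (x i) - F (x (i+1))‖ * ‖x (i+1) - x i‖ := abs_real_inner_le_norm _ _
          _ ≤ (L*δ)*δ := by
              apply mul_le_mul _ hab (norm_nonneg _) (by positivity)
              rw [norm_sub_rev]; exact hlipab
      have h3 : ⟪F (x i), x (i+1) - x i⟫
          = ⟪F (x (i+1)), x (i+1) - x i⟫ + ⟪F (x i) - F (x (i+1)), x (i+1) - x i⟫ := by
        rw [← inner_add_left]; congr 1; abel
      have h4 := abs_le.mp h2
      rw [h3]
      nlinarith [h4.1]
    have hC1 : L*(η i) + M*L'*δ ≤ m/2 := by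
      have h1 : L*(η i) ≤ L*(δ*Ee) := mul_le_mul_of_nonneg_left (hηb i hi.le) hL0
      nlinarith [hδ.le, mul_nonneg (mul_nonneg hM0 hL'0) hδ.le]
    show 0 < ⟪F (x i + η i • (‖F (x i)‖⁻¹ • F (x i))),
        (x (i+1) + η (i+1) • (‖F (x (i+1))‖⁻¹ • F (x (i+1))))
        - (x i + η i • (‖F (x i)‖⁻¹ • F (x i)))⟫
    exact step_aux (x i) (x (i+1)) (F (x i)) (F (x (i+1)))
      (F (x i + η i • (‖F (x i)‖⁻¹ • F (x i)))) δ (η i) (η (i+1)) L m M A L'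
      hδ hm hL0 hL'def hFa hFb hma hMa hmb hab hlipab hlipc hbase
      (hη0 i) (hη1 i hi.le) hδ1 (hηrec i) hC1 hAm
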